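/- Let ε₀ ∈ (0,1), M ≥ 1, and let Y₁,...,Y_M be independent Bernoulli random variables with parameters p₁,...,p_M satisfying pᵢ ∈ [ε₀,1] for all i. Then for all r ∈ (0,1), P(∑_{m=1}^M Y_m ≥ rM) ≤ (1/ε₀)^{M(1-r)} · 2^M · ∏_{m=1}^M p_m. -/

import Mathlib

open MeasureTheory ProbabilityTheory Finset

/-- concentration bound for independent Bernoulli variables with
parameters bounded below by `ε₀`. -/
theorem stmt0 {Ω : Type*} [MeasurableSpace Ω] (P : Measure Ω) [IsProbabilityMeasure P]
    (M : ℕ) (hM : 1 ≤ M) (ε₀ : ℝ) (hε : ε₀ ∈ Set.Ioo (0:ℝ) 1)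
    (Y : Fin M → Ω → ℝ) (p : Fin M → ℝ)
    (hmeas : ∀ i, Measurable (Y i))
    (hvals : ∀ i ω, Y i ω = 0 ∨ Y i ω = 1)
    (hind : iIndepFun Y P)
    (hp : ∀ i, P {ω | Y i ω = 1} = ENNReal.ofReal (p i))
    (hrange : ∀ i, p i ∈ Set.Icc ε₀ 1)
    (r : ℝ) (hr : r ∈ Set.Ioo (0:ℝ) 1) :
    (P {ω | r * M ≤ ∑ i, Y i ω}).toReal
      ≤ (1/ε₀) ^ ((M : ℝ) * (1 - r)) * 2 ^ M * ∏ i, p i := by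
  obtain ⟨hε0, hε1⟩ := hε
  obtain ⟨hr0, hr1⟩ := hr
  have hMpos : (0:ℝ) < M := by exact_mod_cast hM
  set k := ⌈r * M⌉₊ with hkdef
  have hrMk : r * M ≤ k := Nat.le_ceil _
  have hkM : k ≤ M := Nat.ceil_le.mpr (by nlinarith)
  have hp0 : ∀ i, 0 < p i := fun i => lt_of_lt_of_le hε0 (hrange i).1
  -- step 1: event inclusion
  have hsub : {ω | r * M ≤ ∑ i, Y i ω} ⊆
      ⋃ S ∈ Finset.powersetCard k (Finset.univ : Finset (Fin M)),
        (⋂ i ∈ S, {ω | Y i ω = 1}) := by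
    intro ω hω
    simp only [Set.mem_setOf_eq] at hω
    set T := Finset.univ.filter (fun i => Y i ω = 1) with hT
    have hsum : ∑ i, Y i ω = T.card := by
      rw [← Finset.sum_filter_add_sum_filter_not Finset.univ (fun i => Y i ω = 1)]
      have h1 : ∑ i ∈ Finset.univ.filter (fun i => Y i ω = 1), Y i ω = T.card := by
        rw [Finset.sum_congr rfl (fun i hi => (Finset.mem_filter.mp hi).2)]
        simp [hT]
      have h2 : ∑ i ∈ Finset.univ.filter (fun i => ¬ Y i ω = 1), Y i ω = 0 := by
        apply Finset.sum_eq_zero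
        intro i hi
        rcases hvals i ω with h | h
        · exact h
        · exact absurd h (Finset.mem_filter.mp hi).2
      rw [h1, h2, add_zero]
    have hkT : k ≤ T.card := Nat.ceil_le.mpr (by rw [← hsum]; exact hω)
    obtain ⟨S, hST, hScard⟩ := Finset.exists_subset_card_eq hkT
    refine Set.mem_biUnion (Finset.mem_powersetCard.mpr ⟨Finset.subset_univ S, hScard⟩) ?_
    refine Set.mem_iInter₂.mpr (fun i hi => ?_)
    exact (Finset.mem_filter.mp (hST hi)).2
  -- step 2: measure bound by union bound and independence
  have hprod : ∀ S : Finset (Fin M),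
      P (⋂ i ∈ S, {ω | Y i ω = 1}) = ∏ i ∈ S, ENNReal.ofReal (p i) := by
    intro S
    have heq : (⋂ i ∈ S, {ω | Y i ω = 1}) = ⋂ i ∈ S, Y i ⁻¹' {1} := rfl
    have heq2 : ∀ i, P (Y i ⁻¹' {1}) = P {ω | Y i ω = 1} := fun i => rfl
    rw [heq, hind.meas_biInter (s := fun i => Y i ⁻¹' {1})
      (fun i _ => ⟨{1}, measurableSet_singleton 1, rfl⟩)]
    simp only [heq2]
    exact Finset.prod_congr rfl (fun i _ => hp i)
  have hbound : P {ω | r * M ≤ ∑ i, Y i ω} ≤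
      ∑ S ∈ Finset.powersetCard k (Finset.univ : Finset (Fin M)),
        ENNReal.ofReal (∏ i ∈ S, p i) := by
    refine le_trans (measure_mono hsub) ?_
    refine le_trans (measure_biUnion_finset_le _ _) ?_
    refine Finset.sum_le_sum (fun S _ => ?_)
    rw [hprod S, ← ENNReal.ofReal_prod_of_nonneg (fun i _ => (hp0 i).le)]
  -- toReal
  have hRHS : ∑ S ∈ Finset.powersetCard k (Finset.univ : Finset (Fin M)),
        ENNReal.ofReal (∏ i ∈ S, p i)
      = ENNReal.ofReal (∑ S ∈ Finset.powersetCard k (Finset.univ : Finset (Fin M)),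
          ∏ i ∈ S, p i) := by
    rw [ENNReal.ofReal_sum_of_nonneg]
    intro S _
    exact Finset.prod_nonneg (fun i _ => (hp0 i).le)
  have htr : (P {ω | r * M ≤ ∑ i, Y i ω}).toReal ≤
      ∑ S ∈ Finset.powersetCard k (Finset.univ : Finset (Fin M)), ∏ i ∈ S, p i := by
    rw [hRHS] at hbound
    calc (P {ω | r * M ≤ ∑ i, Y i ω}).toReal
        ≤ (ENNReal.ofReal (∑ S ∈ Finset.powersetCard k (Finset.univ : Finset (Fin M)),
            ∏ i ∈ S, p i)).toReal := ENNReal.toReal_mono ENNReal.ofReal_ne_top hbound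
      _ = _ := ENNReal.toReal_ofReal (Finset.sum_nonneg
            (fun S _ => Finset.prod_nonneg (fun i _ => (hp0 i).le)))
  refine le_trans htr ?_
  -- step 3: real arithmetic
  have hterm : ∀ S ∈ Finset.powersetCard k (Finset.univ : Finset (Fin M)),
      ∏ i ∈ S, p i ≤ (1/ε₀) ^ (M - k : ℕ) * ∏ i, p i := by
    intro S hS
    obtain ⟨-, hScard⟩ := Finset.mem_powersetCard.mp hS
    have hsplit : (∏ i, p i) = (∏ i ∈ S, p i) * ∏ i ∈ Finset.univ \ S, p i := by
      rw [← Finset.prod_sdiff (Finset.subset_univ S)]; ring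
    have hcard : (Finset.univ \ S).card = M - k := by
      rw [Finset.card_sdiff_of_subset (Finset.subset_univ S), hScard, Finset.card_univ, Fintype.card_fin]
    have hlow : ε₀ ^ (M - k : ℕ) ≤ ∏ i ∈ Finset.univ \ S, p i := by
      rw [← hcard, ← Finset.prod_const]
      exact Finset.prod_le_prod (fun i _ => hε0.le) (fun i _ => (hrange i).1)
    have hpos : (0:ℝ) < ε₀ ^ (M - k : ℕ) := pow_pos hε0 _
    have hSpos : (0:ℝ) < ∏ i ∈ S, p i := Finset.prod_pos (fun i _ => hp0 i)
    rw [one_div, inv_pow, ← div_eq_inv_mul, le_div_iff₀ hpos]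
    calc (∏ i ∈ S, p i) * ε₀ ^ (M - k : ℕ)
        ≤ (∏ i ∈ S, p i) * ∏ i ∈ Finset.univ \ S, p i :=
          mul_le_mul_of_nonneg_left hlow hSpos.le
      _ = ∏ i, p i := hsplit.symm
  have hcardbound : (Finset.powersetCard k (Finset.univ : Finset (Fin M))).card ≤ 2 ^ M := by
    calc (Finset.powersetCard k (Finset.univ : Finset (Fin M))).card
        ≤ (Finset.powerset (Finset.univ : Finset (Fin M))).card := by
          apply Finset.card_le_card
          intro S hS
          exact Finset.mem_powerset.mpr (Finset.mem_powersetCard.mp hS).1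
      _ = 2 ^ M := by rw [Finset.card_powerset, Finset.card_univ, Fintype.card_fin]
  have hprodnn : 0 ≤ ∏ i, p i := Finset.prod_nonneg (fun i _ => (hp0 i).le)
  calc ∑ S ∈ Finset.powersetCard k (Finset.univ : Finset (Fin M)), ∏ i ∈ S, p i
      ≤ ∑ S ∈ Finset.powersetCard k (Finset.univ : Finset (Fin M)),
          (1/ε₀) ^ (M - k : ℕ) * ∏ i, p i := Finset.sum_le_sum hterm
    _ = (Finset.powersetCard k (Finset.univ : Finset (Fin M))).card *
          ((1/ε₀) ^ (M - k : ℕ) * ∏ i, p i) := by rw [Finset.sum_const, nsmul_eq_mul]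
    _ ≤ (2:ℝ) ^ M * ((1/ε₀) ^ (M - k : ℕ) * ∏ i, p i) := by
        apply mul_le_mul_of_nonneg_right _ (by positivity)
        exact_mod_cast hcardbound
    _ ≤ (2:ℝ) ^ M * ((1/ε₀) ^ ((M : ℝ) * (1 - r)) * ∏ i, p i) := by
        apply mul_le_mul_of_nonneg_left _ (by positivity)
        apply mul_le_mul_of_nonneg_right _ hprodnn
        rw [← Real.rpow_natCast (1/ε₀) (M - k)]
        apply Real.rpow_le_rpow_of_exponent_le
        · rw [le_div_iff₀ hε0, one_mul]; exact hε1.le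
        · rw [Nat.cast_sub hkM]
          nlinarith
    _ = (1/ε₀) ^ ((M : ℝ) * (1 - r)) * 2 ^ M * ∏ i, p i := by ring
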